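/- Let M be a model category, let p ≥ 1, q ≥ 0 and 1 ≤ i ≤ p. Let F, G : Mᵖ ⥤ M and F′, G′ : M^q ⥤ M be functors, each cofibrant in the following sense: for all cofibrations g_j between cofibrant objects of M and every subset S of the index set such that g_j is a trivial cofibration for every j ∈ S, the induced cube (2ᵖ ⥤ M, resp. 2^q ⥤ M) has all latching maps cofibrations in M, and trivial cofibrations at every vertex x with x_j = true for some j ∈ S. Let τ : F → G and τ′ : F′ → G′ be natural transformations such that τ(X₁,…,X_p) and τ′(X′₁,…,X′_q) are weak equivalences in M for all tuples of cofibrant objects. Then for all cofibrant objects X₁,…,X_{p+q−1} of M, the composite morphism F(X₁,…,X_{i−1}, F′(X_i,…,X_{i+q−1}), X_{i+q},…,X_{p+q−1}) → G(X₁,…,X_{i−1}, G′(X_i,…,X_{i+q−1}), X_{i+q},…,X_{p+q−1}), obtained by inserting τ′ into the i-th slot of τ, is a weak equivalence in M. -/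

import Mathlib

open CategoryTheory CategoryTheory.Limits

universe v u

/-- `f` is a retract of `g` in the arrow category. -/
def IsRetract {C : Type u} [Category.{v} C] {X Y X' Y' : C} (f : X ⟶ Y) (g : X' ⟶ Y') : Prop :=
  ∃ (i : X ⟶ X') (r : X' ⟶ X) (i' : Y ⟶ Y') (r' : Y' ⟶ Y),
    i ≫ r = 𝟙 X ∧ i' ≫ r' = 𝟙 Y ∧ i ≫ g = f ≫ i' ∧ g ≫ r' = r ≫ f

/-- A model structure on a category: three classes of morphisms (weak equivalences,
cofibrations, fibrations) satisfying Quillen's axioms (two-out-of-three, closure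
under retracts, lifting, and factorization). -/
structure ModelStructure (C : Type u) [Category.{v} C] where
  W : MorphismProperty C
  Cof : MorphismProperty C
  Fib : MorphismProperty C
  w_comp : ∀ {X Y Z : C} (f : X ⟶ Y) (g : Y ⟶ Z), W f → W g → W (f ≫ g)
  w_cancel_left : ∀ {X Y Z : C} (f : X ⟶ Y) (g : Y ⟶ Z), W f → W (f ≫ g) → W g
  w_cancel_right : ∀ {X Y Z : C} (f : X ⟶ Y) (g : Y ⟶ Z), W g → W (f ≫ g) → W f
  w_retract : ∀ {X Y X' Y' : C} (f : X ⟶ Y) (g : X' ⟶ Y'), IsRetract f g → W g → W f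
  cof_retract : ∀ {X Y X' Y' : C} (f : X ⟶ Y) (g : X' ⟶ Y'), IsRetract f g → Cof g → Cof f
  fib_retract : ∀ {X Y X' Y' : C} (f : X ⟶ Y) (g : X' ⟶ Y'), IsRetract f g → Fib g → Fib f
  lift_cof_trivFib : ∀ {A B X Y : C} (i : A ⟶ B) (p : X ⟶ Y),
    Cof i → Fib p → W p → HasLiftingProperty i p
  lift_trivCof_fib : ∀ {A B X Y : C} (i : A ⟶ B) (p : X ⟶ Y),
    Cof i → W i → Fib p → HasLiftingProperty i p
  factor_cof_trivFib : ∀ {X Y : C} (f : X ⟶ Y), ∃ (Z : C) (g : X ⟶ Z) (h : Z ⟶ Y),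
    Cof g ∧ Fib h ∧ W h ∧ g ≫ h = f
  factor_trivCof_fib : ∀ {X Y : C} (f : X ⟶ Y), ∃ (Z : C) (g : X ⟶ Z) (h : Z ⟶ Y),
    Cof g ∧ W g ∧ Fib h ∧ g ≫ h = f

variable {M : Type u} [Category.{v} M]

/-- An object is cofibrant if the map from the initial object is a cofibration. -/
def ModelStructure.Cofibrant [HasInitial M] (m : ModelStructure M) (X : M) : Prop :=
  m.Cof (initial.to X)

section Latching

variable {P : Type} [Preorder P] [HasColimitsOfSize.{0, 0} M]

/-- The latching object of `F : P ⥤ M` at `x`: the colimit of `F` over the full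
subcategory of all `y < x`. -/
noncomputable def latchingObj (F : P ⥤ M) (x : P) : M :=
  colimit (ObjectProperty.ι (fun y : P => y < x) ⋙ F)

/-- The canonical (latching) map `L_x F ⟶ F x`. -/
noncomputable def latchingMap (F : P ⥤ M) (x : P) : latchingObj F x ⟶ F.obj x :=
  colimit.desc (ObjectProperty.ι (fun y : P => y < x) ⋙ F)
    { pt := F.obj x
      ι :=
        { app := fun y => F.map (homOfLE y.property.le)
          naturality := by
            intro a b f
            dsimp
            rw [Category.comp_id, ← F.map_comp]
            rfl } }

/-- The map induced by a natural transformation on latching objects. -/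
noncomputable def latchingObjHom {F G : P ⥤ M} (τ : F ⟶ G) (x : P) :
    latchingObj F x ⟶ latchingObj G x :=
  colimMap (Functor.whiskerLeft (ObjectProperty.ι (fun y : P => y < x)) τ)

lemma latching_square {F G : P ⥤ M} (τ : F ⟶ G) (x : P) :
    latchingMap F x ≫ τ.app x = latchingObjHom τ x ≫ latchingMap G x := by
  apply colimit.hom_ext
  intro y
  erw [colimit.ι_desc_assoc, latchingObjHom, ι_colimMap_assoc, latchingMap, colimit.ι_desc]
  simp

/-- The relative latching map of `τ : F ⟶ G` at `x`:
the induced map `(L_x G) ⊔_{L_x F} F x ⟶ G x`. -/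
noncomputable def relLatchingMap {F G : P ⥤ M} (τ : F ⟶ G) (x : P) :
    pushout (latchingMap F x) (latchingObjHom τ x) ⟶ G.obj x :=
  pushout.desc (τ.app x) (latchingMap G x) (latching_square τ x)

end Latching

attribute [local instance 2000] Preorder.smallCategory

section Cube

variable {N : Type u} [Category.{v} N] {ι : Type}
variable {Y Z : ι → N} (g : ∀ i, Y i ⟶ Z i)

/-- The edge of the cube in direction `i` between `a ≤ b` in `Bool`. -/
def cubeEdge {i : ι} : ∀ (a b : Bool), a ≤ b → ((cond a (Z i) (Y i)) ⟶ (cond b (Z i) (Y i)))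
  | false, false, _ => 𝟙 _
  | false, true, _ => g i
  | true, true, _ => 𝟙 _
  | true, false, h => absurd h (by decide)

lemma cubeEdge_self {i : ι} (a : Bool) (h : a ≤ a) :
    cubeEdge (i := i) g a a h = 𝟙 (cond a (Z i) (Y i)) := by
  cases a <;> rfl

lemma cubeEdge_comp {i : ι} (a b c : Bool) (hab : a ≤ b) (hbc : b ≤ c) (hac : a ≤ c) :
    cubeEdge (i := i) g a c hac = cubeEdge g a b hab ≫ cubeEdge g b c hbc := by
  cases a <;> cases b <;> cases c <;>
    first
      | exact absurd hab (by decide)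
      | exact absurd hbc (by decide)
      | simp [cubeEdge]

/-- The cube `2^ι ⥤ Nⁱ` induced by the family of morphisms `g i : Y i ⟶ Z i`:
the vertex `x` is sent to the tuple whose `i`-th entry is `Y i` if `x i = false`
and `Z i` if `x i = true`. -/
noncomputable def cube : (ι → Bool) ⥤ (ι → N) where
  obj x := fun i => cond (x i) (Z i) (Y i)
  map {x y} h := fun i => cubeEdge g (x i) (y i) (leOfHom h i)
  map_id x := by
    funext i
    exact cubeEdge_self g (x i) le_rfl
  map_comp {x y z} h h' := by
    funext i
    exact cubeEdge_comp g (x i) (y i) (z i) (leOfHom h i) (leOfHom h' i) _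

end Cube

section CofibrantFunctor

variable {N : Type u} [Category.{v} N] [HasColimitsOfSize.{0, 0} M]

/-- A functor `F : Nⁱ ⥤ M` is cofibrant if for every family of cofibrations
`g i : Y i ⟶ Z i` between cofibrant objects of `N` and every subset `S` of the
index set such that `g i` is a trivial cofibration for all `i ∈ S`, all latching
maps of the induced cube `cube g ⋙ F : 2^ι ⥤ M` are cofibrations in `M`, and are
trivial cofibrations at every vertex `x` with `x i = true` for some `i ∈ S`. -/
def IsCofibrantFunctor [HasInitial N] (mN : ModelStructure N) (mM : ModelStructure M)
    {ι : Type} (F : (ι → N) ⥤ M) : Prop :=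
  ∀ (Y Z : ι → N) (g : ∀ i, Y i ⟶ Z i),
    (∀ i, mN.Cofibrant (Y i)) → (∀ i, mN.Cof (g i)) →
    ∀ S : Set ι, (∀ i ∈ S, mN.W (g i)) →
      (∀ x : ι → Bool, mM.Cof (latchingMap (cube g ⋙ F) x)) ∧
      (∀ x : ι → Bool, (∃ i ∈ S, x i = true) →
        mM.Cof (latchingMap (cube g ⋙ F) x) ∧ mM.W (latchingMap (cube g ⋙ F) x))

end CofibrantFunctor

section Fill

variable {p q : ℕ}

/-- The tuple obtained by putting `A` in slot `i` and `W` elsewhere. -/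
def fillObj (i : Fin p) (W : {j : Fin p // j ≠ i} → M) (A : M) : Fin p → M :=
  fun j => if h : j = i then A else W ⟨j, h⟩

/-- The morphism of tuples which is `φ` in slot `i` and the identity elsewhere. -/
def fillHom (i : Fin p) (W : {j : Fin p // j ≠ i} → M) {A B : M} (φ : A ⟶ B) :
    fillObj i W A ⟶ fillObj i W B := fun j =>
  if h : j = i then
    eqToHom (by simp [fillObj, h]) ≫ φ ≫ eqToHom (by simp [fillObj, h])
  else
    eqToHom (by simp [fillObj, h])

end Fill

set_option synthInstance.maxHeartbeats 1000000
set_option maxHeartbeats 1600000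

section Auxiliary

lemma bool_le_false' {b : Bool} (h : b ≤ false) : b = false := by
  cases b
  · rfl
  · exact absurd h (by decide)


lemma isRetract_conj {C : Type u} [Category.{v} C] {X Y X' Y' : C}
    (a : X ≅ X') (b : Y' ≅ Y) (g : X' ⟶ Y') :
    IsRetract (a.hom ≫ g ≫ b.hom) g :=
  ⟨a.hom, a.inv, b.inv, b.hom, by simp, by simp, by simp, by simp⟩

lemma ModelStructure.w_conj (m : ModelStructure M) {X Y X' Y' : M}
    (a : X ≅ X') (b : Y' ≅ Y) {g : X' ⟶ Y'} {f : X ⟶ Y}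
    (hf : f = a.hom ≫ g ≫ b.hom) (hg : m.W g) : m.W f := by
  rw [hf]; exact m.w_retract _ _ (isRetract_conj a b g) hg

lemma ModelStructure.cof_conj (m : ModelStructure M) {X Y X' Y' : M}
    (a : X ≅ X') (b : Y' ≅ Y) {g : X' ⟶ Y'} {f : X ⟶ Y}
    (hf : f = a.hom ≫ g ≫ b.hom) (hg : m.Cof g) : m.Cof f := by
  rw [hf]; exact m.cof_retract _ _ (isRetract_conj a b g) hg

lemma ModelStructure.w_id (m : ModelStructure M) (X : M) : m.W (𝟙 X) := by
  obtain ⟨Z, g, h, hg, hgw, _, hfac⟩ := m.factor_trivCof_fib (𝟙 X)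
  exact m.w_retract _ _ ⟨𝟙 X, 𝟙 X, g, h, by simp, hfac, by simp, by simp [hfac]⟩ hgw

lemma ModelStructure.cof_id (m : ModelStructure M) (X : M) : m.Cof (𝟙 X) := by
  obtain ⟨Z, g, h, hg, _, _, hfac⟩ := m.factor_cof_trivFib (𝟙 X)
  exact m.cof_retract _ _ ⟨𝟙 X, 𝟙 X, g, h, by simp, hfac, by simp, by simp [hfac]⟩ hg

lemma ModelStructure.cof_iso (m : ModelStructure M) {X Y : M} (e : X ≅ Y) :
    m.Cof e.hom :=
  m.cof_conj e (Iso.refl Y) (by simp) (m.cof_id Y)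

lemma ModelStructure.w_iso (m : ModelStructure M) {X Y : M} (e : X ≅ Y) :
    m.W e.hom :=
  m.w_conj e (Iso.refl Y) (by simp) (m.w_id Y)

lemma ModelStructure.cof_of_llp (m : ModelStructure M) {X Y : M} (f : X ⟶ Y)
    (h : ∀ ⦃P Q : M⦄ (p : P ⟶ Q), m.Fib p → m.W p → HasLiftingProperty f p) :
    m.Cof f := by
  obtain ⟨Z, g, pz, hg, hpf, hpw, hfac⟩ := m.factor_cof_trivFib f
  haveI := h pz hpf hpw
  have sq : CommSq g f pz (𝟙 Y) := ⟨by simp [hfac]⟩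
  exact m.cof_retract f g
    ⟨𝟙 X, 𝟙 X, sq.lift, pz, by simp, sq.fac_right, by simp [sq.fac_left],
      by simp [hfac]⟩ hg

lemma ModelStructure.cof_comp (m : ModelStructure M) {X Y Z : M}
    {f : X ⟶ Y} {g : Y ⟶ Z} (hf : m.Cof f) (hg : m.Cof g) : m.Cof (f ≫ g) := by
  apply m.cof_of_llp
  intro P Q p hfib hw
  haveI := m.lift_cof_trivFib f p hf hfib hw
  haveI := m.lift_cof_trivFib g p hg hfib hw
  infer_instance

lemma ModelStructure.cof_inl (m : ModelStructure M) [HasInitial M]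
    [HasBinaryCoproducts M] {A B : M}
    (hA : m.Cofibrant A) (hB : m.Cofibrant B) :
    m.Cof (coprod.inl : A ⟶ A ⨿ B) := by
  apply m.cof_of_llp
  intro P Q p hfib hw
  constructor
  intro f g sq
  haveI := m.lift_cof_trivFib (initial.to B) p hB hfib hw
  have sqB : CommSq (initial.to P) (initial.to B) p (coprod.inr ≫ g) :=
    ⟨by apply Limits.initial.hom_ext⟩
  exact ⟨⟨⟨coprod.desc f sqB.lift, coprod.inl_desc _ _,
    by
      apply coprod.hom_ext
      · rw [← Category.assoc, coprod.inl_desc]; exact sq.w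
      · rw [← Category.assoc, coprod.inr_desc]; exact sqB.fac_right⟩⟩⟩

lemma ModelStructure.cof_inr (m : ModelStructure M) [HasInitial M]
    [HasBinaryCoproducts M] {A B : M}
    (hA : m.Cofibrant A) (hB : m.Cofibrant B) :
    m.Cof (coprod.inr : B ⟶ A ⨿ B) := by
  apply m.cof_of_llp
  intro P Q p hfib hw
  constructor
  intro f g sq
  haveI := m.lift_cof_trivFib (initial.to A) p hA hfib hw
  have sqA : CommSq (initial.to P) (initial.to A) p (coprod.inl ≫ g) :=
    ⟨by apply Limits.initial.hom_ext⟩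
  exact ⟨⟨⟨coprod.desc sqA.lift f, coprod.inr_desc _ _,
    by
      apply coprod.hom_ext
      · rw [← Category.assoc, coprod.inl_desc]; exact sqA.fac_right
      · rw [← Category.assoc, coprod.inr_desc]; exact sq.w⟩⟩⟩

end Auxiliary
section Aux2

variable {P : Type} [Preorder P] [HasColimitsOfSize.{0, 0} M]

/-- If the latching map at `x₁` is a weak equivalence and `x₀` is the unique
element below `x₁`, then the edge `D x₀ ⟶ D x₁` is a weak equivalence. -/
lemma w_map_of_latching (m : ModelStructure M) (D : P ⥤ M) {x₀ x₁ : P}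
    (hlt : x₀ < x₁) (huniq : ∀ y : P, y < x₁ → y = x₀)
    (hW : m.W (latchingMap D x₁)) : m.W (D.map (homOfLE hlt.le)) := by
  let t₀ : ObjectProperty.FullSubcategory (fun y : P => y < x₁) := ⟨x₀, hlt⟩
  have hT : IsTerminal t₀ := by
    refine IsTerminal.ofUniqueHom (fun Y => ObjectProperty.homMk (homOfLE (le_of_eq (huniq Y.obj Y.property))))
      (fun Y f => ?_)
    apply ObjectProperty.hom_ext
    apply Subsingleton.elim
  haveI : IsIso (colimit.ι (ObjectProperty.ι (fun y : P => y < x₁) ⋙ D) t₀) :=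
    isIso_ι_of_isTerminal hT _
  refine m.w_conj (asIso (colimit.ι (ObjectProperty.ι (fun y : P => y < x₁) ⋙ D) t₀))
    (Iso.refl _) ?_ hW
  have h : colimit.ι (ObjectProperty.ι (fun y : P => y < x₁) ⋙ D) t₀ ≫
      latchingMap D x₁ = D.map (homOfLE hlt.le) := by
    simp [latchingMap]
  rw [← h]
  simp
  erw [Category.comp_id]

end Aux2

section Aux3

variable [HasColimitsOfSize.{0, 0} M] [HasInitial M]

/-- A cofibrant functor carries tuples of cofibrant objects to cofibrant objects. -/
lemma cofibrant_obj (m : ModelStructure M) {ι : Type} (F : (ι → M) ⥤ M)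
    (hF : IsCofibrantFunctor m m F) (X : ι → M) (hX : ∀ k, m.Cofibrant (X k)) :
    m.Cofibrant (F.obj X) := by
  obtain ⟨h1, -⟩ := hF X X (fun k => 𝟙 (X k)) hX (fun k => m.cof_id _) ∅ (by simp)
  set x₀ : ι → Bool := fun _ => false with hx₀
  have hC := h1 x₀
  set D := cube (fun k => 𝟙 (X k)) ⋙ F with hD
  haveI : IsEmpty (ObjectProperty.FullSubcategory (fun y : ι → Bool => y < x₀)) := by
    constructor
    rintro ⟨y, hy⟩
    apply hy.ne
    funext k
    have := (Pi.le_def.mp hy.le) k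
    exact bool_le_false' this
  -- the latching object at the bottom vertex is initial
  let e : (⊥_ M) ≅ latchingObj D x₀ :=
    { hom := initial.to _
      inv := colimit.desc (ObjectProperty.ι (fun y : ι → Bool => y < x₀) ⋙ D)
        ⟨⊥_ M, { app := fun j => (isEmptyElim j : _), naturality := fun j => isEmptyElim j }⟩
      hom_inv_id := by apply Limits.initial.hom_ext
      inv_hom_id := by
        apply colimit.hom_ext
        intro j
        exact isEmptyElim j }
  refine m.cof_conj e (Iso.refl _) ?_ hC
  apply Limits.initial.hom_ext

end Aux3

section Aux4

variable {p : ℕ} {i : Fin p} {W' : {j : Fin p // j ≠ i} → M}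

lemma fillObj_apply_pos (W' : {j : Fin p // j ≠ i} → M) (A : M) :
    fillObj i W' A i = A := dif_pos rfl

lemma fillObj_apply_neg (W' : {j : Fin p // j ≠ i} → M) (A : M) {k : Fin p}
    (h : ¬ k = i) : fillObj i W' A k = W' ⟨k, h⟩ := dif_neg h

lemma fillHom_apply_pos {A B : M} (φ : A ⟶ B) :
    fillHom i W' φ i = eqToHom (fillObj_apply_pos W' A) ≫ φ ≫
      eqToHom (fillObj_apply_pos W' B).symm := dif_pos rfl

lemma fillHom_apply_neg {A B : M} (φ : A ⟶ B) {k : Fin p} (h : ¬ k = i) :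
    fillHom i W' φ k = eqToHom ((fillObj_apply_neg W' A h).trans
      (fillObj_apply_neg W' B h).symm) := dif_neg h

lemma fillHom_id (A : M) : fillHom i W' (𝟙 A) = 𝟙 (fillObj i W' A) := by
  funext k
  by_cases hk : k = i
  · subst hk
    rw [Pi.id_apply, fillHom_apply_pos]
    simp
  · rw [Pi.id_apply, fillHom_apply_neg _ hk]
    exact eqToHom_refl _ _

lemma fillHom_comp {A B C : M} (φ : A ⟶ B) (ψ : B ⟶ C) :
    fillHom i W' (φ ≫ ψ) = fillHom i W' φ ≫ fillHom i W' ψ := by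
  funext k
  by_cases hk : k = i
  · subst hk
    rw [Pi.comp_apply, fillHom_apply_pos, fillHom_apply_pos, fillHom_apply_pos]
    simp
  · rw [Pi.comp_apply, fillHom_apply_neg _ hk, fillHom_apply_neg _ hk,
      fillHom_apply_neg _ hk]
    simp

end Aux4
section Aux5

variable [HasColimits M]


lemma pi_eqToHom_app {ι : Type} {f g : ι → M} (h : f = g) (k : ι) :
    (eqToHom h : f ⟶ g) k = eqToHom (congrFun h k) := by
  subst h; rfl

/-- Key step: a cofibrant functor carries "fill" of a trivial cofibration between
cofibrant objects (in a context of cofibrant objects) to a weak equivalence. -/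
lemma w_map_fill_of_trivCof (m : ModelStructure M) {p : ℕ} (i : Fin p)
    (F : (Fin p → M) ⥤ M) (hF : IsCofibrantFunctor m m F)
    (W' : {j : Fin p // j ≠ i} → M) (hW' : ∀ s, m.Cofibrant (W' s))
    {A B : M} (j : A ⟶ B) (hA : m.Cofibrant A)
    (hjcof : m.Cof j) (hjw : m.W j) :
    m.W (F.map (fillHom i W' j)) := by
  classical
  have hYc : ∀ k, m.Cofibrant (fillObj i W' A k) := by
    intro k
    by_cases hk : k = i
    · subst hk; rw [fillObj_apply_pos]; exact hA
    · rw [fillObj_apply_neg _ _ hk]; exact hW' _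
  have hgc : ∀ k, m.Cof (fillHom i W' j k) := by
    intro k
    by_cases hk : k = i
    · subst hk
      rw [fillHom_apply_pos]
      exact m.cof_conj (eqToIso (fillObj_apply_pos W' A))
        (eqToIso (fillObj_apply_pos W' B).symm) (by simp) hjcof
    · rw [fillHom_apply_neg _ hk]
      have := m.cof_iso (eqToIso ((fillObj_apply_neg W' A hk).trans
        (fillObj_apply_neg W' B hk).symm))
      simpa using this
  have hgS : ∀ k ∈ ({i} : Set (Fin p)), m.W (fillHom i W' j k) := by
    intro k hk
    rw [Set.mem_singleton_iff] at hk
    subst hk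
    rw [fillHom_apply_pos]
    exact m.w_conj (eqToIso (fillObj_apply_pos W' A))
      (eqToIso (fillObj_apply_pos W' B).symm) (by simp) hjw
  obtain ⟨-, h2⟩ := hF (fillObj i W' A) (fillObj i W' B) (fun k => fillHom i W' j k)
    hYc hgc {i} hgS
  have hle : (fun _ => false : Fin p → Bool) ≤ (fun k => decide (k = i)) :=
    fun k => Bool.false_le _
  have hlt : (fun _ => false : Fin p → Bool) < (fun k => decide (k = i)) := by
    refine lt_iff_le_not_ge.mpr ⟨hle, fun h => ?_⟩
    have hcon : (true : Bool) <= false := by simpa using h i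
    exact absurd hcon (by decide)
  have huniq : ∀ y : Fin p → Bool, y < (fun k => decide (k = i)) → y = (fun _ => false) := by
    intro y hy
    funext k
    show y k = false
    by_contra hk'
    have hyk : y k = true := by
      cases hyk : y k
      · exact absurd hyk hk'
      · rfl
    have hki : k = i := by
      by_contra hki
      have h1 : y k ≤ decide (k = i) := Pi.le_def.mp hy.le k
      rw [hyk] at h1
      have h2' : decide (k = i) = false := by simp [hki]
      rw [h2'] at h1
      exact absurd h1 (by decide)
    rw [hki] at hyk
    apply LT.lt.not_ge hy
    intro k'
    by_cases hk'' : k' = i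
    · show decide (k' = i) <= y k'
      rw [hk'', hyk]
      exact Bool.le_true _
    · show decide (k' = i) <= y k'
      have hd : decide (k' = i) = false := by simp [hk'']
      rw [hd]
      exact Bool.false_le _
  have hwl : m.W (latchingMap (cube (fun k => fillHom i W' j k) ⋙ F)
      (fun k => decide (k = i))) :=
    (h2 (fun k => decide (k = i)) ⟨i, Set.mem_singleton i, by simp⟩).2
  have hedge : m.W ((cube (fun k => fillHom i W' j k) ⋙ F).map (homOfLE hlt.le)) :=
    w_map_of_latching m _ hlt huniq hwl
  -- compare the cube edge with the fill morphism
  have hobj : (cube (fun k => fillHom i W' j k)).obj (fun k => decide (k = i)) =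
      fillObj i W' B := by
    funext k
    show cond (decide (k = i)) (fillObj i W' B k) (fillObj i W' A k) = fillObj i W' B k
    by_cases hk : k = i
    · simp [hk]
    · have : decide (k = i) = false := by simp [hk]
      rw [this]
      show fillObj i W' A k = fillObj i W' B k
      rw [fillObj_apply_neg _ _ hk, fillObj_apply_neg _ _ hk]
  have hpi : fillHom i W' j =
      (cube (fun k => fillHom i W' j k)).map (homOfLE hlt.le) ≫ eqToHom hobj := by
    funext k
    rw [Pi.comp_apply, pi_eqToHom_app]
    show fillHom i W' j k =
      cubeEdge (fun k => fillHom i W' j k) false (decide (k = i)) (hle k) ≫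
        eqToHom (congrFun hobj k)
    have key : ∀ (b : Bool) (pk : (false : Bool) ≤ b)
        (hb : cond b (fillObj i W' B k) (fillObj i W' A k) = fillObj i W' B k),
        b = decide (k = i) →
        fillHom i W' j k = cubeEdge (i := k) (fun k => fillHom i W' j k) false b pk ≫
          eqToHom hb := by
      intro b
      cases b
      · intro pk hb hbd
        have hk : ¬ (k = i) := by simpa using hbd.symm
        show fillHom i W' j k = 𝟙 (fillObj i W' A k) ≫ eqToHom hb
        rw [fillHom_apply_neg _ hk, Category.id_comp]
      · intro pk hb hbd
        show fillHom i W' j k = fillHom i W' j k ≫ eqToHom hb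
        rw [eqToHom_refl, Category.comp_id]
    exact key (decide (k = i)) (hle k) (congrFun hobj k) rfl
  have hFeq : F.map (fillHom i W' j) =
      (Iso.refl (F.obj (fillObj i W' A))).hom ≫
        (cube (fun k => fillHom i W' j k) ⋙ F).map (homOfLE hlt.le) ≫
        (eqToIso (congrArg F.obj hobj)).hom := by
    conv_lhs => rw [hpi]
    erw [F.map_comp, eqToHom_map F hobj]
    simp
    rfl
  exact m.w_conj _ _ hFeq hedge

/-- Ken Brown: a cofibrant functor carries "fill" of any weak equivalence between
cofibrant objects to a weak equivalence. -/
lemma w_map_fill_of_we (m : ModelStructure M) {p : ℕ} (i : Fin p)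
    (F : (Fin p → M) ⥤ M) (hF : IsCofibrantFunctor m m F)
    (W' : {j : Fin p // j ≠ i} → M) (hW' : ∀ s, m.Cofibrant (W' s))
    {A B : M} (φ : A ⟶ B) (hA : m.Cofibrant A) (hB : m.Cofibrant B)
    (hw : m.W φ) : m.W (F.map (fillHom i W' φ)) := by
  obtain ⟨C, qm, pm, hq, hpf, hpw, hfac⟩ := m.factor_cof_trivFib (coprod.desc φ (𝟙 B))
  set u : A ⟶ C := coprod.inl ≫ qm with hu
  set v : B ⟶ C := coprod.inr ≫ qm with hv
  have hup : u ≫ pm = φ := by rw [hu, Category.assoc, hfac]; exact coprod.inl_desc _ _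
  have hvp : v ≫ pm = 𝟙 B := by rw [hv, Category.assoc, hfac]; exact coprod.inr_desc _ _
  have hucof : m.Cof u := m.cof_comp (m.cof_inl hA hB) hq
  have hvcof : m.Cof v := m.cof_comp (m.cof_inr hA hB) hq
  have huw : m.W u := m.w_cancel_right u pm hpw (by rw [hup]; exact hw)
  have hvw : m.W v := m.w_cancel_right v pm hpw (by rw [hvp]; exact m.w_id B)
  have h1 : m.W (F.map (fillHom i W' u)) :=
    w_map_fill_of_trivCof m i F hF W' hW' u hA hucof huw
  have h2 : m.W (F.map (fillHom i W' v)) :=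
    w_map_fill_of_trivCof m i F hF W' hW' v hB hvcof hvw
  have h3 : F.map (fillHom i W' v) ≫ F.map (fillHom i W' pm) = 𝟙 _ := by
    rw [← F.map_comp, ← fillHom_comp, hvp, fillHom_id, F.map_id]
  have h4 : m.W (F.map (fillHom i W' pm)) :=
    m.w_cancel_left _ _ h2 (by rw [h3]; exact m.w_id _)
  have h5 : F.map (fillHom i W' φ) = F.map (fillHom i W' u) ≫ F.map (fillHom i W' pm) := by
    rw [← F.map_comp, ← fillHom_comp, hup]
  rw [h5]
  exact m.w_comp _ _ h1 h4

end Aux5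
/-- Inserting an objectwise (on cofibrant tuples) weak equivalence
`τ' : F' ⟶ G'` into the `i`-th slot of an objectwise (on cofibrant tuples) weak
equivalence `τ : F ⟶ G` of cofibrant functors yields a weak equivalence on every
tuple of cofibrant objects. -/
theorem statement7 [HasLimits M] [HasColimits M] (m : ModelStructure M)
    {p q : ℕ} (i : Fin p)
    (F G : (Fin p → M) ⥤ M) (F' G' : (Fin q → M) ⥤ M)
    (hF : IsCofibrantFunctor m m F) (hG : IsCofibrantFunctor m m G)
    (hF' : IsCofibrantFunctor m m F') (hG' : IsCofibrantFunctor m m G')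
    (τ : F ⟶ G) (τ' : F' ⟶ G')
    (hτ : ∀ X : Fin p → M, (∀ j, m.Cofibrant (X j)) → m.W (τ.app X))
    (hτ' : ∀ X : Fin q → M, (∀ k, m.Cofibrant (X k)) → m.W (τ'.app X)) :
    ∀ X : ({j : Fin p // j ≠ i} ⊕ Fin q) → M, (∀ a, m.Cofibrant (X a)) →
      m.W (F.map (fillHom i (fun s => X (Sum.inl s)) (τ'.app fun k => X (Sum.inr k))) ≫
        τ.app (fillObj i (fun s => X (Sum.inl s)) (G'.obj fun k => X (Sum.inr k)))) := by
  intro X hX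
  have hW' : ∀ s : {j : Fin p // j ≠ i}, m.Cofibrant ((fun s => X (Sum.inl s)) s) :=
    fun s => hX _
  have hX' : ∀ k, m.Cofibrant ((fun k => X (Sum.inr k)) k) := fun k => hX _
  have hFA : m.Cofibrant (F'.obj fun k => X (Sum.inr k)) := cofibrant_obj m F' hF' _ hX'
  have hGB : m.Cofibrant (G'.obj fun k => X (Sum.inr k)) := cofibrant_obj m G' hG' _ hX'
  have hφ : m.W (τ'.app fun k => X (Sum.inr k)) := hτ' _ hX'
  have h1 : m.W (F.map (fillHom i (fun s => X (Sum.inl s)) (τ'.app fun k => X (Sum.inr k)))) :=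
    w_map_fill_of_we m i F hF _ hW' _ hFA hGB hφ
  have h2 : m.W (τ.app (fillObj i (fun s => X (Sum.inl s)) (G'.obj fun k => X (Sum.inr k)))) := by
    apply hτ
    intro j
    by_cases hj : j = i
    · subst hj; rw [fillObj_apply_pos]; exact hGB
    · rw [fillObj_apply_neg _ _ hj]; exact hX _
  exact m.w_comp _ _ h1 h2
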